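/- arXiv:2404.17734 — 2 statements merged into one kernel-verified Lean document; each statement's English description precedes it below -/
import Mathlib

section
/- Suppose each unit's treatment effect r_{d=1,ij} - r_{d=0,ij} lies in [K0, K1]. Then the sample average treatment effect κ = (1/N) Σ_ij (r_{d=1,ij} - r_{d=0,ij}) satisfies LB ≤ κ ≤ UB, where LB = (1/N) Σ_ij (r_Tij - r_Cij) - K0·(1/N) Σ_ij (d_Tij - d_Cij) + K0 and UB = (1/N) Σ_ij (r_Tij - r_Cij) - K1·(1/N) Σ_ij (d_Tij - d_Cij) + K1. -/
/-- Partial identification bounds for the sample average treatment effect. -/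
theorem sate_partial_identification_bounds {N : ℕ} (hN : 0 < N)
    (dT dC : Fin N → ℝ) (rT rC rd1 rd0 : Fin N → ℝ) (K0 K1 : ℝ)
    (hK : K0 ≤ K1)
    (hT : ∀ ij, dT ij = 0 ∨ dT ij = 1) (hC : ∀ ij, dC ij = 0 ∨ dC ij = 1)
    (hmono : ∀ ij, dC ij ≤ dT ij)
    (heff : ∀ ij, K0 ≤ rd1 ij - rd0 ij ∧ rd1 ij - rd0 ij ≤ K1)
    (hexcl : ∀ ij, rT ij - rC ij = (dT ij - dC ij) * (rd1 ij - rd0 ij)) :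
    ((1 : ℝ) / N) * ∑ ij, (rT ij - rC ij)
        - K0 * (((1 : ℝ) / N) * ∑ ij, (dT ij - dC ij)) + K0
      ≤ ((1 : ℝ) / N) * ∑ ij, (rd1 ij - rd0 ij) ∧
    ((1 : ℝ) / N) * ∑ ij, (rd1 ij - rd0 ij)
      ≤ ((1 : ℝ) / N) * ∑ ij, (rT ij - rC ij)
        - K1 * (((1 : ℝ) / N) * ∑ ij, (dT ij - dC ij)) + K1 := by
  have hNpos : (0 : ℝ) < N := by exact_mod_cast hN
  have hNne : (N : ℝ) ≠ 0 := ne_of_gt hNpos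
  have key : ∀ ij, (rT ij - rC ij - K0 * (dT ij - dC ij) + K0 ≤ rd1 ij - rd0 ij) ∧
      (rd1 ij - rd0 ij ≤ rT ij - rC ij - K1 * (dT ij - dC ij) + K1) := by
    intro ij
    have he := hexcl ij
    have h0 := (heff ij).1
    have h1 := (heff ij).2
    have hd : dT ij - dC ij = 0 ∨ dT ij - dC ij = 1 := by
      rcases hT ij with hT1 | hT1 <;> rcases hC ij with hC1 | hC1 <;>
        rw [hT1, hC1] <;> norm_num
      have := hmono ij
      rw [hT1, hC1] at this
      linarith
    rcases hd with hd | hd <;> rw [hd] at he ⊢ <;> constructor <;> nlinarith [he]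
  have hlb : ∑ ij, (rT ij - rC ij - K0 * (dT ij - dC ij) + K0) ≤
      ∑ ij, (rd1 ij - rd0 ij) :=
    Finset.sum_le_sum fun ij _ => (key ij).1
  have hub : ∑ ij, (rd1 ij - rd0 ij) ≤
      ∑ ij, (rT ij - rC ij - K1 * (dT ij - dC ij) + K1) :=
    Finset.sum_le_sum fun ij _ => (key ij).2
  have e0 : ∑ ij : Fin N, (rT ij - rC ij - K0 * (dT ij - dC ij) + K0) =
      (∑ ij, (rT ij - rC ij)) - K0 * (∑ ij, (dT ij - dC ij)) + N * K0 := by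
    rw [Finset.sum_add_distrib, Finset.sum_sub_distrib, ← Finset.mul_sum]
    simp [mul_comm]
  have e1 : ∑ ij : Fin N, (rT ij - rC ij - K1 * (dT ij - dC ij) + K1) =
      (∑ ij, (rT ij - rC ij)) - K1 * (∑ ij, (dT ij - dC ij)) + N * K1 := by
    rw [Finset.sum_add_distrib, Finset.sum_sub_distrib, ← Finset.mul_sum]
    simp [mul_comm]
  rw [e0] at hlb
  rw [e1] at hub
  have hinv : (0 : ℝ) ≤ 1 / N := by positivity
  constructor
  · have h := mul_le_mul_of_nonneg_left hlb hinv
    calc ((1 : ℝ) / N) * ∑ ij, (rT ij - rC ij)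
          - K0 * (((1 : ℝ) / N) * ∑ ij, (dT ij - dC ij)) + K0
        = ((1 : ℝ) / N) * ((∑ ij, (rT ij - rC ij)) - K0 * (∑ ij, (dT ij - dC ij)) + N * K0) := by
          field_simp
      _ ≤ ((1 : ℝ) / N) * ∑ ij, (rd1 ij - rd0 ij) := h
  · have h := mul_le_mul_of_nonneg_left hub hinv
    calc ((1 : ℝ) / N) * ∑ ij, (rd1 ij - rd0 ij)
        ≤ ((1 : ℝ) / N) * ((∑ ij, (rT ij - rC ij)) - K1 * (∑ ij, (dT ij - dC ij)) + N * K1) := h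
      _ = ((1 : ℝ) / N) * ∑ ij, (rT ij - rC ij)
          - K1 * (((1 : ℝ) / N) * ∑ ij, (dT ij - dC ij)) + K1 := by
          field_simp
end

section
/- For a matched-pair design, the expectation of the classical variance estimator S² = (1/(I(I-1))) Σ_i (τ̂_i - τ̄)², where τ̂_i = τ_i + ε_i with fixed unit effects τ_i and independent ε_i taking values ±e_i each with probability 1/2, and τ̄ = (1/I) Σ_i τ̂_i, equals Var(τ̄) + (1/(I(I-1))) Σ_i (τ_i - τ̄₀)² where τ̄₀ = (1/I) Σ_i τ_i; hence E[S²] ≥ Var(τ̄) with equality iff all τ_i are equal. -/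
open Finset

lemma flip_invol {I : ℕ} (i : Fin I) :
    Function.Involutive (fun z : Fin I → Bool => Function.update z i (!z i)) := by
  intro z
  simp [Function.update_idem]

lemma sum_flip_zero {I : ℕ} (i : Fin I) (f : (Fin I → Bool) → ℝ)
    (hf : ∀ z, f (Function.update z i (!z i)) = - f z) :
    ∑ z : Fin I → Bool, f z = 0 := by
  have h1 : ∑ z : Fin I → Bool, f z
      = ∑ z : Fin I → Bool, f (Function.update z i (!z i)) :=
    (Fintype.sum_bijective _ (flip_invol i).bijective _ f (fun z => rfl)).symm
  have h3 : ∑ z : Fin I → Bool, f (Function.update z i (!z i))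
      = - ∑ z : Fin I → Bool, f z := by
    simp only [hf, Finset.sum_neg_distrib]
  linarith

variable {I : ℕ} (e : Fin I → ℝ)

lemma eps_first_moment (i : Fin I) :
    ∑ z : Fin I → Bool, (if z i then e i else -e i) = 0 := by
  apply sum_flip_zero i
  intro z
  rw [Function.update_self]
  cases z i <;> simp

lemma eps_second_moment (i j : Fin I) :
    ∑ z : Fin I → Bool, (if z i then e i else -e i) * (if z j then e j else -e j)
      = if i = j then 2 ^ I * e i ^ 2 else 0 := by
  by_cases hij : i = j
  · subst hij
    simp only [if_pos rfl]
    have : ∀ z : Fin I → Bool,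
        (if z i then e i else -e i) * (if z i then e i else -e i) = e i ^ 2 := by
      intro z; cases z i <;> simp <;> ring
    rw [Finset.sum_congr rfl (fun z _ => this z), Finset.sum_const]
    simp [mul_comm]
  · rw [if_neg hij]
    apply sum_flip_zero i
    intro z
    rw [Function.update_self, Function.update_of_ne (fun h => hij (by rw [h]))]
    cases z i <;> cases z j <;> simp

lemma key_sum (A c : ℝ) (i : Fin I) :
    ∑ z : Fin I → Bool,
      (A + (if z i then e i else -e i)
        - c * ∑ j, (if z j then e j else -e j)) ^ 2
    = 2 ^ I * (A ^ 2 + (1 - 2 * c) * e i ^ 2 + c ^ 2 * ∑ j, e j ^ 2) := by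
  set x : (Fin I → Bool) → Fin I → ℝ := fun z j => if z j then e j else -e j with hxdef
  have hcard : (Finset.univ : Finset (Fin I → Bool)).card = 2 ^ I := by
    simp [Finset.card_univ]
  have hx : ∑ z : Fin I → Bool, x z i = 0 := eps_first_moment e i
  have hxx : ∑ z : Fin I → Bool, x z i * x z i = 2 ^ I * e i ^ 2 := by
    have h : ∀ z : Fin I → Bool, x z i * x z i = e i ^ 2 := by
      intro z
      rw [hxdef]
      cases hz : z i <;> simp [hz, pow_two]
    rw [Finset.sum_congr rfl fun z _ => h z, Finset.sum_const, hcard]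
    simp [mul_comm]
  have hs0 : ∑ z : Fin I → Bool, (∑ j, x z j) = 0 := by
    rw [Finset.sum_comm]
    exact Finset.sum_eq_zero fun j _ => eps_first_moment e j
  have hxs : ∑ z : Fin I → Bool, (x z i * ∑ j, x z j) = 2 ^ I * e i ^ 2 := by
    have h1 : ∀ z : Fin I → Bool, x z i * ∑ j, x z j = ∑ j, x z i * x z j :=
      fun z => Finset.mul_sum _ _ _
    rw [Finset.sum_congr rfl fun z _ => h1 z, Finset.sum_comm]
    have h2 : ∀ j : Fin I, ∑ z : Fin I → Bool, x z i * x z j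
        = if i = j then 2 ^ I * e i ^ 2 else 0 := fun j => eps_second_moment e i j
    rw [Finset.sum_congr rfl fun j _ => h2 j]
    simp
  have hss : ∑ z : Fin I → Bool, (∑ j, x z j) * (∑ j, x z j)
      = 2 ^ I * ∑ j, e j ^ 2 := by
    have h1 : ∀ z : Fin I → Bool, (∑ j, x z j) * (∑ j, x z j)
        = ∑ j, ∑ k, x z j * x z k := fun z => Finset.sum_mul_sum _ _ _ _
    rw [Finset.sum_congr rfl fun z _ => h1 z, Finset.sum_comm]
    have : ∀ j : Fin I, ∑ z : Fin I → Bool, ∑ k, x z j * x z k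
        = 2 ^ I * e j ^ 2 := by
      intro j
      rw [Finset.sum_comm]
      have h2 : ∀ k : Fin I, ∑ z : Fin I → Bool, x z j * x z k
          = if j = k then 2 ^ I * e j ^ 2 else 0 := fun k => eps_second_moment e j k
      rw [Finset.sum_congr rfl fun k _ => h2 k]
      simp
    rw [Finset.sum_congr rfl fun j _ => this j, ← Finset.mul_sum]
  calc ∑ z : Fin I → Bool, (A + x z i - c * ∑ j, x z j) ^ 2
      = ∑ z : Fin I → Bool, (A ^ 2 + (2 * A) * x z i + x z i * x z i
          + (-(2 * A * c)) * (∑ j, x z j) + (-(2 * c)) * (x z i * ∑ j, x z j)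
          + c ^ 2 * ((∑ j, x z j) * (∑ j, x z j))) :=
        Finset.sum_congr rfl fun z _ => by ring
    _ = (∑ _z : Fin I → Bool, A ^ 2) + (2 * A) * (∑ z : Fin I → Bool, x z i)
          + (∑ z : Fin I → Bool, x z i * x z i)
          + (-(2 * A * c)) * (∑ z : Fin I → Bool, (∑ j, x z j))
          + (-(2 * c)) * (∑ z : Fin I → Bool, (x z i * ∑ j, x z j))
          + c ^ 2 * (∑ z : Fin I → Bool, (∑ j, x z j) * (∑ j, x z j)) := by
        simp only [Finset.sum_add_distrib, Finset.mul_sum]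
    _ = 2 ^ I * (A ^ 2 + (1 - 2 * c) * e i ^ 2 + c ^ 2 * ∑ j, e j ^ 2) := by
        rw [hx, hxx, hs0, hxs, hss, Finset.sum_const, hcard]
        ring


/-- Expectation of the classical matched-pair variance estimator: it equals
`Var(τ̄) + (1/(I(I-1))) Σ (τ_i - τ̄₀)²`, hence overestimates `Var(τ̄)` with
equality iff all unit effects `τ_i` are equal. Expectations are uniform
averages over the `2^I` sign vectors `z : Fin I → Bool`. -/
theorem variance_estimator_expectation (I : ℕ) (hI : 2 ≤ I)
    (τ e : Fin I → ℝ) :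
    (let τhat : (Fin I → Bool) → Fin I → ℝ :=
        fun z i => τ i + (if z i then e i else -e i);
     let τbar : (Fin I → Bool) → ℝ := fun z => ((1 : ℝ) / I) * ∑ i, τhat z i;
     let S2 : (Fin I → Bool) → ℝ :=
        fun z => (1 / ((I : ℝ) * (I - 1))) * ∑ i, (τhat z i - τbar z) ^ 2;
     let ES2 : ℝ := ∑ z : Fin I → Bool, ((1 : ℝ) / 2 ^ I) * S2 z;
     let varτbar : ℝ := ((1 : ℝ) / I ^ 2) * ∑ i, e i ^ 2;
     let τbar0 : ℝ := ((1 : ℝ) / I) * ∑ i, τ i;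
     ES2 = varτbar + (1 / ((I : ℝ) * (I - 1))) * ∑ i, (τ i - τbar0) ^ 2 ∧
     varτbar ≤ ES2 ∧
     (ES2 = varτbar ↔ ∀ i j, τ i = τ j)) := by
  intro τhat τbar S2 ES2 varτbar τbar0
  have hI2 : (2 : ℝ) ≤ (I : ℝ) := by exact_mod_cast hI
  have hI0 : (I : ℝ) ≠ 0 := by linarith
  have hI1 : (I : ℝ) - 1 ≠ 0 := by intro h; linarith
  have h2I : (0 : ℝ) < 2 ^ I := by positivity
  have hc0 : (0 : ℝ) < (I : ℝ) * ((I : ℝ) - 1) := by nlinarith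
  have hpos : (0 : ℝ) < 1 / ((I : ℝ) * ((I : ℝ) - 1)) := by
    exact div_pos zero_lt_one hc0
  have hcardI : (Finset.univ : Finset (Fin I)).card = I := by simp
  have hmain : ES2 = varτbar
      + (1 / ((I : ℝ) * (I - 1))) * ∑ i, (τ i - τbar0) ^ 2 := by
    show (∑ z : Fin I → Bool, ((1 : ℝ) / 2 ^ I) * ((1 / ((I : ℝ) * ((I : ℝ) - 1)))
          * ∑ i, ((τ i + (if z i then e i else -e i))
              - ((1 : ℝ) / I) * ∑ j, (τ j + (if z j then e j else -e j))) ^ 2))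
        = ((1 : ℝ) / (I : ℝ) ^ 2) * ∑ i, e i ^ 2
          + (1 / ((I : ℝ) * ((I : ℝ) - 1)))
            * ∑ i, (τ i - ((1 : ℝ) / I) * ∑ j, τ j) ^ 2
    have hdiff : ∀ (z : Fin I → Bool) (i : Fin I),
        (τ i + (if z i then e i else -e i))
            - ((1 : ℝ) / I) * ∑ j, (τ j + (if z j then e j else -e j))
        = (τ i - ((1 : ℝ) / I) * ∑ j, τ j) + (if z i then e i else -e i)
            - ((1 : ℝ) / I) * ∑ j, (if z j then e j else -e j) := by
      intro z i
      rw [Finset.sum_add_distrib]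
      ring
    calc ∑ z : Fin I → Bool, ((1 : ℝ) / 2 ^ I) * ((1 / ((I : ℝ) * ((I : ℝ) - 1)))
            * ∑ i, ((τ i + (if z i then e i else -e i))
                - ((1 : ℝ) / I) * ∑ j, (τ j + (if z j then e j else -e j))) ^ 2)
        = ∑ z : Fin I → Bool, ((1 : ℝ) / 2 ^ I) * ((1 / ((I : ℝ) * ((I : ℝ) - 1)))
            * ∑ i, ((τ i - ((1 : ℝ) / I) * ∑ j, τ j) + (if z i then e i else -e i)
                - ((1 : ℝ) / I) * ∑ j, (if z j then e j else -e j)) ^ 2) := by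
          exact Finset.sum_congr rfl fun z _ => by
            rw [Finset.sum_congr rfl fun i _ => by rw [hdiff z i]]
      _ = ((1 : ℝ) / 2 ^ I) * ((1 / ((I : ℝ) * ((I : ℝ) - 1)))
            * ∑ i, ∑ z : Fin I → Bool,
              ((τ i - ((1 : ℝ) / I) * ∑ j, τ j) + (if z i then e i else -e i)
                - ((1 : ℝ) / I) * ∑ j, (if z j then e j else -e j)) ^ 2) := by
          simp only [← Finset.mul_sum]
          rw [Finset.sum_comm]
      _ = ((1 : ℝ) / 2 ^ I) * ((1 / ((I : ℝ) * ((I : ℝ) - 1)))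
            * ∑ i, (2 : ℝ) ^ I * ((τ i - ((1 : ℝ) / I) * ∑ j, τ j) ^ 2
                + (1 - 2 * ((1 : ℝ) / I)) * e i ^ 2
                + ((1 : ℝ) / I) ^ 2 * ∑ j, e j ^ 2)) := by
          exact congrArg _ (congrArg _ (Finset.sum_congr rfl fun i _ =>
            key_sum e (τ i - ((1 : ℝ) / I) * ∑ j, τ j) ((1 : ℝ) / I) i))
      _ = ((1 : ℝ) / (I : ℝ) ^ 2) * ∑ i, e i ^ 2
            + (1 / ((I : ℝ) * ((I : ℝ) - 1)))
              * ∑ i, (τ i - ((1 : ℝ) / I) * ∑ j, τ j) ^ 2 := by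
          rw [← Finset.mul_sum]
          rw [show (∑ i, ((τ i - ((1 : ℝ) / I) * ∑ j, τ j) ^ 2
                + (1 - 2 * ((1 : ℝ) / I)) * e i ^ 2
                + ((1 : ℝ) / I) ^ 2 * ∑ j, e j ^ 2))
              = (∑ i, (τ i - ((1 : ℝ) / I) * ∑ j, τ j) ^ 2)
                + (1 - 2 * ((1 : ℝ) / I)) * (∑ i, e i ^ 2)
                + (I : ℝ) * (((1 : ℝ) / I) ^ 2 * ∑ j, e j ^ 2) from by
            rw [Finset.sum_add_distrib, Finset.sum_add_distrib,
              ← Finset.mul_sum, Finset.sum_const, hcardI, nsmul_eq_mul]]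
          field_simp
          ring
  refine ⟨hmain, ?_, ?_⟩
  · have hnn : 0 ≤ (1 / ((I : ℝ) * ((I : ℝ) - 1))) * ∑ i, (τ i - τbar0) ^ 2 :=
      mul_nonneg (le_of_lt hpos) (Finset.sum_nonneg fun i _ => sq_nonneg _)
    rw [hmain]
    linarith
  · constructor
    · intro h
      have h0 : (1 / ((I : ℝ) * ((I : ℝ) - 1))) * ∑ i, (τ i - τbar0) ^ 2 = 0 := by
        rw [hmain] at h
        linarith
      have hsum : ∑ i, (τ i - τbar0) ^ 2 = 0 := by
        rcases mul_eq_zero.mp h0 with h1 | h1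
        · exact absurd h1 (ne_of_gt hpos)
        · exact h1
      have hall : ∀ i ∈ Finset.univ, (τ i - τbar0) ^ 2 = 0 :=
        (Finset.sum_eq_zero_iff_of_nonneg (fun i _ => sq_nonneg _)).mp hsum
      have heq : ∀ i : Fin I, τ i = τbar0 := by
        intro i
        have := hall i (Finset.mem_univ i)
        have := pow_eq_zero_iff (n := 2) (by norm_num) |>.mp this
        linarith [sub_eq_zero.mp this]
      intro i j
      rw [heq i, heq j]
    · intro h
      have hIpos : 0 < I := by omega
      set i0 : Fin I := ⟨0, hIpos⟩ with hi0
      have hbar : τbar0 = τ i0 := by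
        show ((1 : ℝ) / I) * ∑ i, τ i = τ i0
        rw [Finset.sum_congr rfl fun i _ => h i i0, Finset.sum_const, hcardI,
          nsmul_eq_mul]
        field_simp
      have hz : ∑ i, (τ i - τbar0) ^ 2 = 0 :=
        Finset.sum_eq_zero fun i _ => by rw [hbar, h i i0, sub_self]; ring
      rw [hmain, hz, mul_zero, add_zero]
end
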